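/- With the hypotheses of the type-σ[r] − Σ ε_i[i] system: for a hyperplane H, let j be minimal with S_j not contained in H (j = r if H = S_{r-1}). Then the number of lines of S contained in H equals s_1 − Σ_{i=1}^{j-1} ε_i·2^{i-2}, where s_1 = (σ·(2^{r-2} − 1) − Σ_{i=2}^{r-1} ε_i·(2^{i-2} − 1) + ε_1/2)/3. Consequently ε_1 is even. -/

import Mathlib

/-- The ambient vector space `F_2^r`. -/
abbrev Vec (r : ℕ) := Fin r → ZMod 2

/-- A line of `PG(r-1,2)`: a 2-dimensional subspace of `F_2^r`. -/
def isLine {r : ℕ} (L : Submodule (ZMod 2) (Vec r)) : Prop :=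
  Module.finrank (ZMod 2) L = 2

/-- A point of `PG(r-1,2)`: a 1-dimensional subspace of `F_2^r`. -/
def isPoint {r : ℕ} (P : Submodule (ZMod 2) (Vec r)) : Prop :=
  Module.finrank (ZMod 2) P = 1

/-- A hyperplane of `PG(r-1,2)`: an `(r-1)`-dimensional subspace of `F_2^r`. -/
def isHyperplane {r : ℕ} (H : Submodule (ZMod 2) (Vec r)) : Prop :=
  Module.finrank (ZMod 2) H = r - 1

open scoped Classical in
/-- The number of members of the multiset `S` (of lines) contained in the subspace `H`. -/
noncomputable def linesIn {r : ℕ} (S : Multiset (Submodule (ZMod 2) (Vec r)))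
    (H : Submodule (ZMod 2) (Vec r)) : ℕ :=
  Multiset.card (S.filter (fun L => L ≤ H))

/-- An `(n,r,s)` system: a multiset of `n` lines of `PG(r-1,2)` such that every hyperplane
contains at most `s` of them and some hyperplane contains exactly `s` of them. -/
def IsSystem (r n s : ℕ) (S : Multiset (Submodule (ZMod 2) (Vec r))) : Prop :=
  Multiset.card S = n ∧ (∀ L ∈ S, isLine L) ∧
    (∀ H, isHyperplane H → linesIn S H ≤ s) ∧
    (∃ H, isHyperplane H ∧ linesIn S H = s)

open scoped Classical in
/-- The number of lines of the multiset `S` passing through the (nonzero) vector `v`. -/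
noncomputable def lineCountThrough {r : ℕ} (S : Multiset (Submodule (ZMod 2) (Vec r)))
    (v : Vec r) : ℕ :=
  Multiset.card (S.filter (fun L => v ∈ L))


open scoped Classical

noncomputable def NZ {r : ℕ} (W : Submodule (ZMod 2) (Vec r)) : Finset (Vec r) :=
  Finset.univ.filter (fun v => v ∈ W ∧ v ≠ 0)

lemma NZ_card {r : ℕ} (W : Submodule (ZMod 2) (Vec r)) :
    (NZ W).card = 2 ^ (Module.finrank (ZMod 2) W) - 1 := by
  have h1 : NZ W = (Finset.univ.filter (fun v => v ∈ W)).erase 0 := by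
    ext v; simp [NZ, Finset.mem_erase, and_comm]
  have h2 : (Finset.univ.filter (fun v : Vec r => v ∈ W)).card = Fintype.card W := by
    rw [Fintype.card_subtype]
  have h3 : Fintype.card W = 2 ^ (Module.finrank (ZMod 2) W) := by
    have := Module.card_eq_pow_finrank (K := ZMod 2) (V := W)
    simpa using this
  rw [h1, Finset.card_erase_of_mem (by simp [W.zero_mem]), h2, h3]

lemma NZ_filter {r : ℕ} (W X : Submodule (ZMod 2) (Vec r)) :
    (NZ W).filter (fun v => v ∈ X) = NZ (X ⊓ W) := by
  ext v
  simp [NZ, Submodule.mem_inf]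
  tauto

lemma finrank_Vec (r : ℕ) : Module.finrank (ZMod 2) (Vec r) = r :=
  Module.finrank_fin_fun _

lemma finrank_inf_hyperplane {r : ℕ} (hr : 1 ≤ r) {H W : Submodule (ZMod 2) (Vec r)}
    (hH : isHyperplane H) (hW : ¬ W ≤ H) :
    Module.finrank (ZMod 2) (W ⊓ H : Submodule (ZMod 2) (Vec r)) + 1
      = Module.finrank (ZMod 2) W := by
  have hsup : Module.finrank (ZMod 2) (W ⊔ H : Submodule (ZMod 2) (Vec r)) = r := by
    have hlt : H < W ⊔ H := lt_of_le_of_ne le_sup_right (by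
      intro h; exact hW (le_sup_left.trans h.symm.le))
    have h1 : Module.finrank (ZMod 2) H < Module.finrank (ZMod 2) (W ⊔ H : Submodule (ZMod 2) (Vec r)) :=
      Submodule.finrank_lt_finrank_of_lt hlt
    have h2 : Module.finrank (ZMod 2) (W ⊔ H : Submodule (ZMod 2) (Vec r)) ≤ r := by
      simpa [finrank_Vec] using Submodule.finrank_le (W ⊔ H)
    rw [isHyperplane] at hH
    have h0 : Module.finrank (ZMod 2) H ≤ r := by
      simpa [finrank_Vec] using Submodule.finrank_le H
    omega
  have key := Submodule.finrank_sup_add_finrank_inf_eq W H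
  have h0 : Module.finrank (ZMod 2) W ≤ r := by
    simpa [finrank_Vec] using Submodule.finrank_le W
  rw [isHyperplane] at hH
  omega

lemma sum_lineCount {r : ℕ} (T : Finset (Vec r)) (S : Multiset (Submodule (ZMod 2) (Vec r))) :
    ∑ v ∈ T, lineCountThrough S v
      = (S.map (fun L => (T.filter (fun v => v ∈ L)).card)).sum := by
  induction S using Multiset.induction with
  | empty => simp [lineCountThrough]
  | cons a s ih =>
    simp only [lineCountThrough, Multiset.filter_cons, Multiset.card_add,
      Multiset.map_cons, Multiset.sum_cons] at *
    rw [Finset.sum_add_distrib, ih]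
    congr 1
    rw [Finset.card_filter]
    apply Finset.sum_congr rfl
    intro v _
    by_cases h : v ∈ a <;> simp [h]

lemma sum_if_le {r : ℕ} (S : Multiset (Submodule (ZMod 2) (Vec r)))
    (W : Submodule (ZMod 2) (Vec r)) :
    (S.map (fun L => if L ≤ W then 3 else 1)).sum
      = Multiset.card S + 2 * linesIn S W := by
  induction S using Multiset.induction with
  | empty => simp [linesIn]
  | cons a s ih =>
    simp only [linesIn, Multiset.filter_cons, Multiset.card_add,
      Multiset.map_cons, Multiset.sum_cons, Multiset.card_cons] at *
    rw [ih]
    by_cases h : a ≤ W <;> simp [h, linesIn] <;> ring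

/-- Master counting identity over any subspace `W` whose line-intersections are controlled. -/
lemma master {r : ℕ}
    (Flag : ℕ → Submodule (ZMod 2) (Vec r))
    (σ : ℕ) (ε : ℕ → ℤ)
    (S : Multiset (Submodule (ZMod 2) (Vec r))) (hlines : ∀ L ∈ S, isLine L)
    (htype : ∀ v : Vec r, v ≠ 0 → (lineCountThrough S v : ℤ) =
        (σ : ℤ) - ∑ i ∈ Finset.Icc 1 (r - 1), ε i * (if v ∈ Flag i then 1 else 0))
    (W : Submodule (ZMod 2) (Vec r))
    (hcase : ∀ L ∈ S, ¬ L ≤ W → Module.finrank (ZMod 2) (L ⊓ W : Submodule (ZMod 2) (Vec r)) = 1) :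
    (Multiset.card S : ℤ) + 2 * (linesIn S W : ℤ)
      = (σ : ℤ) * (2 ^ (Module.finrank (ZMod 2) W) - 1)
        - ∑ i ∈ Finset.Icc 1 (r - 1),
            ε i * (2 ^ (Module.finrank (ZMod 2) (Flag i ⊓ W : Submodule (ZMod 2) (Vec r))) - 1) := by
  have hpt : ∀ X : Submodule (ZMod 2) (Vec r),
      (((NZ W).filter (fun v => v ∈ X)).card : ℤ)
        = 2 ^ (Module.finrank (ZMod 2) (X ⊓ W : Submodule (ZMod 2) (Vec r))) - 1 := by
    intro X
    rw [NZ_filter, NZ_card]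
    have : (1 : ℕ) ≤ 2 ^ (Module.finrank (ZMod 2) (X ⊓ W : Submodule (ZMod 2) (Vec r))) :=
      Nat.one_le_two_pow
    push_cast [this]
    ring
  -- left-hand form of the sum
  have hL : (∑ v ∈ NZ W, (lineCountThrough S v : ℤ))
      = (Multiset.card S : ℤ) + 2 * (linesIn S W : ℤ) := by
    have := sum_lineCount (NZ W) S
    have hmap : (S.map (fun L => ((NZ W).filter (fun v => v ∈ L)).card)).sum
        = (S.map (fun L => if L ≤ W then 3 else 1)).sum := by
      apply congrArg Multiset.sum
      apply Multiset.map_congr rfl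
      intro L hLS
      by_cases h : L ≤ W
      · have : L ⊓ W = L := inf_eq_left.mpr h
        rw [NZ_filter, NZ_card, this, hlines L hLS]
        simp [h]
      · have h1 := hcase L hLS h
        rw [NZ_filter, NZ_card, h1]
        simp [h]
    have := this.trans (hmap.trans (sum_if_le S W))
    exact_mod_cast congrArg (Nat.cast : ℕ → ℤ) this
  -- right-hand form of the sum
  have hR : (∑ v ∈ NZ W, (lineCountThrough S v : ℤ))
      = (σ : ℤ) * (2 ^ (Module.finrank (ZMod 2) W) - 1)
        - ∑ i ∈ Finset.Icc 1 (r - 1),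
            ε i * (2 ^ (Module.finrank (ZMod 2) (Flag i ⊓ W : Submodule (ZMod 2) (Vec r))) - 1) := by
    rw [Finset.sum_congr rfl (fun v hv => htype v (by simp [NZ] at hv; exact hv.2))]
    rw [Finset.sum_sub_distrib, Finset.sum_const]
    congr 1
    · have hc : ((NZ W).card : ℤ) = 2 ^ (Module.finrank (ZMod 2) W) - 1 := by
        rw [NZ_card]
        have : (1 : ℕ) ≤ 2 ^ (Module.finrank (ZMod 2) W) := Nat.one_le_two_pow
        push_cast [this]; ring
      rw [nsmul_eq_mul, hc]; ring
    · rw [Finset.sum_comm]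
      apply Finset.sum_congr rfl
      intro i _
      rw [← Finset.mul_sum]
      congr 1
      rw [← hpt (Flag i), Finset.card_filter]
      push_cast
      rfl
  rw [← hL, hR]

lemma hyper_eq {r : ℕ} (hr : 1 ≤ r)
    (Flag : ℕ → Submodule (ZMod 2) (Vec r))
    (σ : ℕ) (ε : ℕ → ℤ)
    (S : Multiset (Submodule (ZMod 2) (Vec r))) (hlines : ∀ L ∈ S, isLine L)
    (htype : ∀ v : Vec r, v ≠ 0 → (lineCountThrough S v : ℤ) =
        (σ : ℤ) - ∑ i ∈ Finset.Icc 1 (r - 1), ε i * (if v ∈ Flag i then 1 else 0))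
    (H : Submodule (ZMod 2) (Vec r)) (hH : isHyperplane H)
    (d : ℕ → ℕ)
    (hd : ∀ i ∈ Finset.Icc 1 (r - 1),
      Module.finrank (ZMod 2) (Flag i ⊓ H : Submodule (ZMod 2) (Vec r)) = d i) :
    (Multiset.card S : ℤ) + 2 * (linesIn S H : ℤ)
      = (σ : ℤ) * (2 ^ (r - 1) - 1)
        - ∑ i ∈ Finset.Icc 1 (r - 1), ε i * (2 ^ (d i) - 1) := by
  have hcase : ∀ L ∈ S, ¬ L ≤ H →
      Module.finrank (ZMod 2) (L ⊓ H : Submodule (ZMod 2) (Vec r)) = 1 := by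
    intro L hL h
    have := finrank_inf_hyperplane hr hH h
    rw [hlines L hL] at this
    omega
  have := master Flag σ ε S hlines htype H hcase
  rw [hH] at this
  rw [this]
  congr 1
  exact Finset.sum_congr rfl (fun i hi => by rw [hd i hi])

lemma top_eq {r : ℕ} (hr : 1 ≤ r)
    (Flag : ℕ → Submodule (ZMod 2) (Vec r))
    (hdim : ∀ i ∈ Finset.Icc 1 (r - 1), Module.finrank (ZMod 2) (Flag i) = i)
    (σ : ℕ) (ε : ℕ → ℤ)
    (S : Multiset (Submodule (ZMod 2) (Vec r))) (hlines : ∀ L ∈ S, isLine L)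
    (htype : ∀ v : Vec r, v ≠ 0 → (lineCountThrough S v : ℤ) =
        (σ : ℤ) - ∑ i ∈ Finset.Icc 1 (r - 1), ε i * (if v ∈ Flag i then 1 else 0)) :
    3 * (Multiset.card S : ℤ)
      = (σ : ℤ) * (2 ^ r - 1)
        - ∑ i ∈ Finset.Icc 1 (r - 1), ε i * (2 ^ i - 1) := by
  have hcase : ∀ L ∈ S, ¬ L ≤ (⊤ : Submodule (ZMod 2) (Vec r)) →
      Module.finrank (ZMod 2) (L ⊓ ⊤ : Submodule (ZMod 2) (Vec r)) = 1 := by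
    intro L _ h; exact absurd le_top h
  have := master Flag σ ε S hlines htype ⊤ hcase
  have htopr : Module.finrank (ZMod 2) (⊤ : Submodule (ZMod 2) (Vec r)) = r := by
    rw [finrank_top, finrank_Vec]
  rw [htopr] at this
  have hlt : linesIn S (⊤ : Submodule (ZMod 2) (Vec r)) = Multiset.card S := by
    unfold linesIn
    rw [Multiset.filter_eq_self.mpr (fun L _ => le_top)]
  rw [hlt] at this
  have hsum : ∑ i ∈ Finset.Icc 1 (r - 1),
      ε i * (2 ^ (Module.finrank (ZMod 2) (Flag i ⊓ ⊤ : Submodule (ZMod 2) (Vec r))) - 1)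
      = ∑ i ∈ Finset.Icc 1 (r - 1), ε i * (2 ^ i - 1) := by
    apply Finset.sum_congr rfl
    intro i hi
    rw [inf_top_eq, hdim i hi]
  rw [hsum] at this
  linarith

open scoped Classical in
/-- Hyperplane intersection numbers of a system of type `σ[r] - ∑ ε_i [i]`: if `j` is
minimal with `Flag j ≰ H` (with `j = r` if `H = Flag (r-1)`), then the number of lines of
`S` contained in `H` equals `s_1 - ∑_{i=1}^{j-1} ε_i·2^{i-2}` where
`s_1 = (σ·(2^{r-2}-1) - ∑_{i=2}^{r-1} ε_i·(2^{i-2}-1) + ε_1/2)/3`; moreover `ε_1` is even. -/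
theorem type_hyperplane_count (r : ℕ) (hr : 3 ≤ r)
    (Flag : ℕ → Submodule (ZMod 2) (Vec r))
    (hdim : ∀ i ∈ Finset.Icc 1 (r - 1), Module.finrank (ZMod 2) (Flag i) = i)
    (hmono : ∀ i j, 1 ≤ i → i ≤ j → j ≤ r - 1 → Flag i ≤ Flag j)
    (σ : ℕ) (ε : ℕ → ℤ)
    (S : Multiset (Submodule (ZMod 2) (Vec r))) (hlines : ∀ L ∈ S, isLine L)
    (htype : ∀ v : Vec r, v ≠ 0 → (lineCountThrough S v : ℤ) =
        (σ : ℤ) - ∑ i ∈ Finset.Icc 1 (r - 1), ε i * (if v ∈ Flag i then 1 else 0))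
    (H : Submodule (ZMod 2) (Vec r)) (hH : isHyperplane H)
    (j : ℕ) (hj1 : 1 ≤ j) (hjr : j ≤ r)
    (hbelow : ∀ i, 1 ≤ i → i < j → Flag i ≤ H)
    (hnotin : j ≤ r - 1 → ¬ Flag j ≤ H) :
    (linesIn S H : ℚ) =
      ((σ : ℚ) * (2 ^ (r - 2) - 1)
          - (∑ i ∈ Finset.Icc 2 (r - 1), (ε i : ℚ) * (2 ^ (i - 2) - 1))
          + (ε 1 : ℚ) / 2) / 3
        - ∑ i ∈ Finset.Icc 1 (j - 1), (ε i : ℚ) * 2 ^ i / 4 ∧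
    2 ∣ ε 1 := by
  have hr1 : 1 ≤ r := by omega
  -- the ε₁ parity, via a hyperplane avoiding Flag 1
  have hdvd : 2 ∣ ε 1 := by
    have h1m : (1 : ℕ) ∈ Finset.Icc 1 (r - 1) := by
      simp; omega
    have hF1 : Module.finrank (ZMod 2) (Flag 1) = 1 := hdim 1 h1m
    have hne : Flag 1 ≠ ⊥ := by
      intro h
      rw [h] at hF1
      simp [finrank_bot] at hF1
    obtain ⟨v₁, hv₁F, hv₁⟩ := Submodule.exists_mem_ne_zero_of_ne_bot hne
    obtain ⟨k, hk⟩ : ∃ k, v₁ k ≠ 0 := by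
      by_contra h
      push_neg at h
      exact hv₁ (funext h)
    set f : Vec r →ₗ[ZMod 2] ZMod 2 := LinearMap.proj k with hf
    have hfv₁ : f v₁ ≠ 0 := hk
    have hsurj : Function.Surjective f := by
      intro c
      refine ⟨(c * (v₁ k)⁻¹) • v₁, ?_⟩
      have : (v₁ k) ≠ 0 := hk
      simp [hf]
      field_simp
    set H' := LinearMap.ker f with hH'
    have hH'hyp : isHyperplane H' := by
      have hker := LinearMap.finrank_range_add_finrank_ker f
      rw [LinearMap.range_eq_top.mpr hsurj, finrank_top] at hker
      rw [Module.finrank_self, finrank_Vec] at hker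
      unfold isHyperplane
      rw [hH']
      omega
    have hnotle : ∀ i ∈ Finset.Icc 1 (r - 1), ¬ Flag i ≤ H' := by
      intro i hi hle
      simp at hi
      have : v₁ ∈ Flag i := hmono 1 i le_rfl hi.1 hi.2 hv₁F
      have : v₁ ∈ H' := hle this
      exact hfv₁ this
    have hd' : ∀ i ∈ Finset.Icc 1 (r - 1),
        Module.finrank (ZMod 2) (Flag i ⊓ H' : Submodule (ZMod 2) (Vec r)) = i - 1 := by
      intro i hi
      have := finrank_inf_hyperplane hr1 hH'hyp (hnotle i hi)
      rw [hdim i hi] at this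
      omega
    have e1 := hyper_eq hr1 Flag σ ε S hlines htype H' hH'hyp _ hd'
    have e2 := top_eq hr1 Flag hdim σ ε S hlines htype
    -- 6 * linesIn S H' = σ*(2^(r-1)-2) - ∑ ε i * (2^(i-1) - 2)
    have e3 : 6 * (linesIn S H' : ℤ)
        = (σ : ℤ) * (3 * 2 ^ (r - 1) - 2 ^ r - 2)
          - ∑ i ∈ Finset.Icc 1 (r - 1), ε i * (3 * 2 ^ (i - 1) - 2 ^ i - 2) := by
      have hdist : ∑ i ∈ Finset.Icc 1 (r - 1), ε i * (3 * 2 ^ (i - 1) - 2 ^ i - 2)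
          = 3 * (∑ i ∈ Finset.Icc 1 (r - 1), ε i * (2 ^ (i - 1) - 1))
            - ∑ i ∈ Finset.Icc 1 (r - 1), ε i * (2 ^ i - 1) := by
        rw [Finset.mul_sum, ← Finset.sum_sub_distrib]
        exact Finset.sum_congr rfl (fun i _ => by ring)
      rw [hdist]
      linarith
    -- pass to ZMod 2
    have e4 := congrArg (fun z : ℤ => (z : ZMod 2)) e3
    push_cast at e4
    have h2 : (2 : ZMod 2) = 0 := by decide
    have hpr : (2 : ZMod 2) ^ (r - 1) = 0 := by
      rw [h2]; exact zero_pow (by omega)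
    have hpr2 : (2 : ZMod 2) ^ r = 0 := by
      rw [h2]; exact zero_pow (by omega)
    rw [hpr, hpr2] at e4
    have hsum1 : ∑ i ∈ Finset.Icc 1 (r - 1),
        (ε i : ZMod 2) * (3 * 2 ^ (i - 1) - 2 ^ i - 2) = (ε 1 : ZMod 2) := by
      rw [Finset.sum_eq_single 1]
      · have : ((3 : ZMod 2) * 2 ^ (1 - 1) - 2 ^ 1 - 2) = 1 := by decide
        rw [this, mul_one]
      · intro i hi hne1
        simp at hi
        have hi2 : 2 ≤ i := by omega
        have hp1 : (2 : ZMod 2) ^ (i - 1) = 0 := by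
          rw [h2]; exact zero_pow (by omega)
        have hp2 : (2 : ZMod 2) ^ i = 0 := by
          rw [h2]; exact zero_pow (by omega)
        rw [hp1, hp2, h2]; ring
      · intro h; exact absurd h1m h
    rw [hsum1] at e4
    have he4 : (ε 1 : ZMod 2) = 0 := by
      rw [show (6 : ZMod 2) = 0 by decide, show (2 : ZMod 2) = 0 by decide] at e4
      simp at e4
      exact e4.symm
    exact (ZMod.intCast_zmod_eq_zero_iff_dvd (ε 1) 2).mp he4
  refine ⟨?_, hdvd⟩
  -- main hyperplane count
  have hd : ∀ i ∈ Finset.Icc 1 (r - 1),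
      Module.finrank (ZMod 2) (Flag i ⊓ H : Submodule (ZMod 2) (Vec r))
        = if i < j then i else i - 1 := by
    intro i hi
    simp at hi
    by_cases hij : i < j
    · rw [if_pos hij]
      have hle : Flag i ≤ H := hbelow i hi.1 hij
      rw [inf_eq_left.mpr hle, hdim i (by simp; omega)]
    · rw [if_neg hij]
      push_neg at hij
      have hnle : ¬ Flag i ≤ H := by
        intro hle
        have hjr' : j ≤ r - 1 := le_trans hij hi.2
        exact hnotin hjr' (le_trans (hmono j i hj1 hij hi.2) hle)
      have := finrank_inf_hyperplane hr1 hH hnle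
      rw [hdim i (by simp; omega)] at this
      omega
  have e1 := hyper_eq hr1 Flag σ ε S hlines htype H hH _ hd
  have e2 := top_eq hr1 Flag hdim σ ε S hlines htype
  -- cast to ℚ
  have e1Q := congrArg (fun z : ℤ => (z : ℚ)) e1
  have e2Q := congrArg (fun z : ℤ => (z : ℚ)) e2
  push_cast at e1Q e2Q
  obtain ⟨m, hm⟩ : ∃ m, r = m + 3 := ⟨r - 3, by omega⟩
  subst hm
  simp only [show m + 3 - 1 = m + 2 by omega, show m + 3 - 2 = m + 1 by omega]
    at e1Q e2Q ⊢
  have hicc : Finset.Icc 1 (m + 2) = insert 1 (Finset.Icc 2 (m + 2)) := by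
    ext i; simp; omega
  have hs2 : ∑ i ∈ Finset.Icc 2 (m + 2), (ε i : ℚ) * (2 ^ (i - 2) - 1)
      = ∑ i ∈ Finset.Icc 1 (m + 2), (ε i : ℚ) * (2 ^ (i - 2) - 1) := by
    rw [hicc, Finset.sum_insert (by simp)]
    norm_num
  have hsj : ∑ i ∈ Finset.Icc 1 (j - 1), (ε i : ℚ) * 2 ^ i / 4
      = ∑ i ∈ Finset.Icc 1 (m + 2), (if i < j then (ε i : ℚ) * 2 ^ i / 4 else 0) := by
    rw [← Finset.sum_filter]
    apply Finset.sum_congr _ (fun _ _ => rfl)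
    ext i
    simp only [Finset.mem_filter, Finset.mem_Icc]
    omega
  have hone : ∑ i ∈ Finset.Icc 1 (m + 2), (if i = 1 then (ε i : ℚ) else 0) = (ε 1 : ℚ) := by
    rw [Finset.sum_ite_eq' (Finset.Icc 1 (m + 2)) 1 (fun i => (ε i : ℚ))]
    simp
  have hcomb : 3 * ∑ i ∈ Finset.Icc 1 (m + 2),
        (ε i : ℚ) * (2 ^ (if i < j then i else i - 1) - 1)
      = ∑ i ∈ Finset.Icc 1 (m + 2), (ε i : ℚ) * (2 ^ i - 1)
        + 2 * ∑ i ∈ Finset.Icc 1 (m + 2), (ε i : ℚ) * (2 ^ (i - 2) - 1)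
        - ∑ i ∈ Finset.Icc 1 (m + 2), (if i = 1 then (ε i : ℚ) else 0)
        + 6 * ∑ i ∈ Finset.Icc 1 (m + 2), (if i < j then (ε i : ℚ) * 2 ^ i / 4 else 0) := by
    rw [Finset.mul_sum, Finset.mul_sum, Finset.mul_sum, ← Finset.sum_add_distrib,
      ← Finset.sum_sub_distrib, ← Finset.sum_add_distrib]
    apply Finset.sum_congr rfl
    intro i hi
    simp only [Finset.mem_Icc] at hi
    obtain h1 | ⟨k, rfl⟩ : i = 1 ∨ ∃ k, i = k + 2 := by
      rcases Nat.lt_or_ge i 2 with h | h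
      · left; omega
      · right; exact ⟨i - 2, by omega⟩
    · subst h1
      by_cases hij : 1 < j <;> simp [hij] <;> norm_num <;> ring
    · have hne : ¬ (k + 2 = 1) := by omega
      by_cases hij : k + 2 < j <;>
        simp only [hij, hne, if_true, if_false, if_pos, if_neg, not_false_iff,
          show k + 2 - 1 = k + 1 from rfl, show k + 2 - 2 = k from rfl] <;>
        ring
  linear_combination (1/2) * e1Q - (1/6) * e2Q - (1/6) * hcomb + (1/3) * hs2 + hsj + (1/6) * hone
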